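/- If α and β are COTS-paths in a topological space Y such that the end point of α equals the start point of β, then the union α ∪ β is again a COTS-path in Y. -/

import Mathlib

open Set

/-- The minimal open neighborhood of a point in a topological space. -/
def minOpenNhd {X : Type*} (t : TopologicalSpace X) (x : X) : Set X :=
  ⋂₀ {U : Set X | t.IsOpen U ∧ x ∈ U}

/-- The specialization-style preorder: `x ≤ y` iff `U_x ⊆ U_y`. -/
def specLE {X : Type*} (t : TopologicalSpace X) (x y : X) : Prop :=
  minOpenNhd t x ⊆ minOpenNhd t y

/-- Two points are adjacent if distinct and comparable in the specialization order. -/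
def Adjacent {X : Type*} (t : TopologicalSpace X) (x y : X) : Prop :=
  x ≠ y ∧ (specLE t x y ∨ specLE t y x)

/-- The adjacency set of a point. -/
def adjSet {X : Type*} (t : TopologicalSpace X) (x : X) : Set X := {y | Adjacent t x y}

/-- A COTS: a connected space in which every 3-point subset has a point separating
the other two. -/
def IsCOTS {X : Type*} (t : TopologicalSpace X) : Prop :=
  @ConnectedSpace X t ∧
    ∀ Y : Set X, Y.ncard = 3 →
      ∃ y ∈ Y, ∃ a ∈ Y \ {y}, ∃ b ∈ Y \ {y},
        @connectedComponentIn X t {y}ᶜ a ≠ @connectedComponentIn X t {y}ᶜ b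

/-- An endpoint of a COTS: a point with at most one neighbor. -/
def IsEndpoint {X : Type*} (t : TopologicalSpace X) (x : X) : Prop :=
  (adjSet t x).ncard ≤ 1

/-- A COTS-path: the continuous image of a finite COTS. -/
def IsCOTSPath {Y : Type*} (tY : TopologicalSpace Y) (P : Set Y) : Prop :=
  ∃ (C : Type) (tC : TopologicalSpace C), Finite C ∧ IsCOTS tC ∧
    ∃ f : C → Y, @Continuous C Y tC tY f ∧ Set.range f = P

/-- A COTS-path with prescribed start and end points. -/
def IsCOTSPathFromTo {Y : Type*} (tY : TopologicalSpace Y) (P : Set Y) (a b : Y) : Prop :=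
  ∃ (C : Type) (tC : TopologicalSpace C), Finite C ∧ IsCOTS tC ∧
    ∃ f : C → Y, @Continuous C Y tC tY f ∧ Set.range f = P ∧
      ∃ c₀ c₁ : C, IsEndpoint tC c₀ ∧ IsEndpoint tC c₁ ∧ f c₀ = a ∧ f c₁ = b

/-- A COTS-arc: the homeomorphic image of a finite COTS. -/
def IsCOTSArc {Y : Type*} (tY : TopologicalSpace Y) (A : Set Y) : Prop :=
  ∃ (C : Type) (tC : TopologicalSpace C), Finite C ∧ IsCOTS tC ∧
    ∃ f : C → Y, @Topology.IsEmbedding C Y tC tY f ∧ Set.range f = A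

/-- A COTS-arc with prescribed endpoints. -/
def IsCOTSArcFromTo {Y : Type*} (tY : TopologicalSpace Y) (A : Set Y) (a b : Y) : Prop :=
  ∃ (C : Type) (tC : TopologicalSpace C), Finite C ∧ IsCOTS tC ∧
    ∃ f : C → Y, @Topology.IsEmbedding C Y tC tY f ∧ Set.range f = A ∧
      ∃ c₀ c₁ : C, IsEndpoint tC c₀ ∧ IsEndpoint tC c₁ ∧ f c₀ = a ∧ f c₁ = b

/-- The COTS-distance: one less than the minimal cardinality of a COTS-arc
joining two points (`⊤` if there is no such arc). -/
noncomputable def cotsDist {X : Type*} (t : TopologicalSpace X) (x y : X) : ℕ∞ :=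
  sInf {n : ℕ∞ | ∃ A : Set X, IsCOTSArcFromTo t A x y ∧ (A.ncard : ℕ∞) = n + 1}

/-- The Khalimsky topology on ℤ. -/
def khal : TopologicalSpace ℤ :=
  TopologicalSpace.generateFrom
    {s : Set ℤ | ∃ n : ℤ, (Odd n ∧ s = {n}) ∨ (Even n ∧ s = {n - 1, n, n + 1})}

/-- The Khalimsky plane topology on ℤ × ℤ. -/
def khalPlane : TopologicalSpace (ℤ × ℤ) := @instTopologicalSpaceProd ℤ ℤ khal khal

/-- A point of the Khalimsky plane is pure if its coordinates have the same parity. -/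
def IsPurePt (p : ℤ × ℤ) : Prop := (Even p.1 ∧ Even p.2) ∨ (Odd p.1 ∧ Odd p.2)

/-- A digital Jordan curve: a finite set of at least 4 points such that removing
any point leaves a COTS-arc. -/
def IsJordanCurve {X : Type*} (t : TopologicalSpace X) (J : Set X) : Prop :=
  J.Finite ∧ 4 ≤ J.ncard ∧ ∀ j ∈ J, IsCOTSArc t (J \ {j})

/-- The interior of a digital Jordan curve in the Khalimsky plane: the union of the
finite (bounded) connected components of its complement. -/
def jInterior (J : Set (ℤ × ℤ)) : Set (ℤ × ℤ) :=
  ⋃₀ {S | ∃ p ∉ J, S = @connectedComponentIn _ khalPlane Jᶜ p ∧ S.Finite}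


/-! ### Auxiliary development -/

namespace COTSGlueAux

open Set List Relation

/-! #### Khalimsky topology basics -/

lemma khal_open_of {U : Set ℤ}
    (h : ∀ n ∈ U, Even n → (n - 1) ∈ U ∧ (n + 1) ∈ U) : khal.IsOpen U := by
  letI := khal
  classical
  have hU : U = ⋃ n ∈ U, (if Even n then ({n - 1, n, n + 1} : Set ℤ) else {n}) := by
    ext m
    simp only [Set.mem_iUnion, exists_prop]
    constructor
    · intro hm
      refine ⟨m, hm, ?_⟩
      split <;> simp
    · rintro ⟨n, hn, hm⟩
      split at hm
      · obtain ⟨h1, h2⟩ := h n hn (by assumption)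
        simp only [Set.mem_insert_iff, Set.mem_singleton_iff] at hm
        rcases hm with rfl | rfl | rfl
        · exact h1
        · exact hn
        · exact h2
      · rwa [Set.mem_singleton_iff.mp hm]
  rw [hU]
  refine isOpen_biUnion fun n hn => ?_
  split
  · exact TopologicalSpace.GenerateOpen.basic _ ⟨n, Or.inr ⟨by assumption, rfl⟩⟩
  · exact TopologicalSpace.GenerateOpen.basic _
      ⟨n, Or.inl ⟨Int.not_even_iff_odd.mp (by assumption), rfl⟩⟩

lemma khal_open_even_mem {U : Set ℤ} (hU : khal.IsOpen U) :
    ∀ n ∈ U, Even n → (n - 1) ∈ U ∧ (n + 1) ∈ U := by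
  have hU' : TopologicalSpace.GenerateOpen
      {s : Set ℤ | ∃ n : ℤ, (Odd n ∧ s = {n}) ∨ (Even n ∧ s = {n - 1, n, n + 1})} U := hU
  clear hU
  induction hU' with
  | basic s hs =>
    intro n hn he
    obtain ⟨m, ⟨hm, rfl⟩ | ⟨hm, rfl⟩⟩ := hs
    · rw [Set.mem_singleton_iff] at hn
      subst hn
      rw [Int.even_iff] at he
      rw [Int.odd_iff] at hm
      omega
    · simp only [Set.mem_insert_iff, Set.mem_singleton_iff] at hn ⊢
      rw [Int.even_iff] at he hm
      constructor <;> omega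
  | univ => intro n _ _; exact ⟨trivial, trivial⟩
  | inter s t hs ht ihs iht =>
    intro n hn he
    exact ⟨⟨(ihs n hn.1 he).1, (iht n hn.2 he).1⟩, (ihs n hn.1 he).2, (iht n hn.2 he).2⟩
  | sUnion S _ ih =>
    intro n hn he
    obtain ⟨s, hs, hns⟩ := hn
    exact ⟨⟨s, hs, (ih s hs n hns he).1⟩, ⟨s, hs, (ih s hs n hns he).2⟩⟩

lemma khal_mem_closure_add {n : ℤ} (he : Even n) : n ∈ @closure ℤ khal {n + 1} := by
  letI := khal
  rw [mem_closure_iff]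
  intro o ho hno
  exact ⟨n + 1, (khal_open_even_mem ho n hno he).2, rfl⟩

lemma khal_mem_closure_sub {n : ℤ} (he : Even n) : n ∈ @closure ℤ khal {n - 1} := by
  letI := khal
  rw [mem_closure_iff]
  intro o ho hno
  exact ⟨n - 1, (khal_open_even_mem ho n hno he).1, rfl⟩

lemma khal_pair_preconnected (k : ℤ) : @IsPreconnected ℤ khal {k, k + 1} := by
  letI := khal
  rcases Int.even_or_odd k with he | ho
  · refine (isPreconnected_singleton (x := k + 1)).subset_closure (by simp) ?_
    intro m hm
    simp only [Set.mem_insert_iff, Set.mem_singleton_iff] at hm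
    rcases hm with rfl | rfl
    · exact khal_mem_closure_add he
    · exact subset_closure rfl
  · have he : Even (k + 1) := by
      rw [Int.even_iff]; rw [Int.odd_iff] at ho; omega
    refine (isPreconnected_singleton (x := k)).subset_closure (by simp) ?_
    intro m hm
    simp only [Set.mem_insert_iff, Set.mem_singleton_iff] at hm
    rcases hm with rfl | rfl
    · exact subset_closure rfl
    · have := khal_mem_closure_sub he
      simpa using this

lemma khal_Icc_preconnected (k : ℕ) : @IsPreconnected ℤ khal (Icc 0 (k : ℤ)) := by
  letI := khal
  induction k with
  | zero => simpa using (isPreconnected_singleton (x := (0:ℤ)))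
  | succ k ih =>
    have he : Icc (0:ℤ) ((k:ℤ) + 1) = Icc 0 (k:ℤ) ∪ Icc (k:ℤ) ((k:ℤ) + 1) :=
      (Icc_union_Icc_eq_Icc (by positivity) (by omega)).symm
    have hcast : ((k + 1 : ℕ) : ℤ) = (k : ℤ) + 1 := by push_cast; ring
    rw [hcast, he]
    have hpair : @IsPreconnected ℤ khal (Icc (k:ℤ) ((k:ℤ) + 1)) := by
      have : Icc (k:ℤ) ((k:ℤ) + 1) = {(k:ℤ), (k:ℤ) + 1} := by
        ext m
        simp only [Set.mem_Icc, Set.mem_insert_iff, Set.mem_singleton_iff]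
        omega
      rw [this]
      exact khal_pair_preconnected _
    exact IsPreconnected.union (k:ℤ) (by simp) (by simp) ih hpair

lemma khal_Icc_connectedSpace (N : ℤ) (hN : 0 ≤ N) :
    @ConnectedSpace ↥(Icc (0:ℤ) N) (@instTopologicalSpaceSubtype ℤ _ khal) := by
  letI := khal
  apply Subtype.connectedSpace
  refine ⟨⟨0, by simp [hN]⟩, ?_⟩
  obtain ⟨k, rfl⟩ := Int.eq_ofNat_of_zero_le hN
  exact khal_Icc_preconnected k

lemma khal_Icc_sep (N : ℤ) {x y z : ↥(Icc (0:ℤ) N)} (hxy : (x:ℤ) < y) (hyz : (y:ℤ) < z) :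
    @connectedComponentIn _ (@instTopologicalSpaceSubtype ℤ _ khal) {y}ᶜ x ≠
      @connectedComponentIn _ (@instTopologicalSpaceSubtype ℤ _ khal) {y}ᶜ z := by
  letI := khal
  classical
  intro heq
  set s := connectedComponentIn ({y}ᶜ : Set ↥(Icc (0:ℤ) N)) x with hsdef
  have hxne : x ∈ ({y}ᶜ : Set ↥(Icc (0:ℤ) N)) := by
    intro h
    rw [Set.mem_singleton_iff] at h
    rw [h] at hxy
    omega
  have hzne : z ∈ ({y}ᶜ : Set ↥(Icc (0:ℤ) N)) := by
    intro h
    rw [Set.mem_singleton_iff] at h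
    rw [h] at hyz
    omega
  have hxs : x ∈ s := mem_connectedComponentIn hxne
  have hzs : z ∈ s := by
    rw [heq]
    exact mem_connectedComponentIn hzne
  set ε : ℤ := if Even (y:ℤ) then 0 else 1 with hε
  have hε0 : 0 ≤ ε ∧ ε ≤ 1 := by
    by_cases hy : Even (y:ℤ) <;> simp [hε, hy]
  have hεeven : Even ((y:ℤ) + ε) ∧ Even ((y:ℤ) - ε) := by
    by_cases hy : Even (y:ℤ)
    · rw [Int.even_iff] at hy
      constructor <;> · rw [Int.even_iff]; simp [hε, Int.even_iff.mpr hy]; omega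
    · rw [Int.not_even_iff] at hy
      constructor <;> · rw [Int.even_iff]; simp [hε, Int.not_even_iff.mpr hy]; omega
  have hopen : ∀ W : Set ℤ, (∀ n ∈ W, Even n → (n - 1) ∈ W ∧ (n + 1) ∈ W) →
      IsOpen (Subtype.val ⁻¹' W : Set ↥(Icc (0:ℤ) N)) :=
    fun W hW => IsOpen.preimage continuous_subtype_val (khal_open_of hW)
  set U : Set ↥(Icc (0:ℤ) N) := Subtype.val ⁻¹' {n : ℤ | n < (y:ℤ) + ε} with hUdef
  set V : Set ↥(Icc (0:ℤ) N) := Subtype.val ⁻¹' {n : ℤ | (y:ℤ) - ε < n} with hVdef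
  have hUo : IsOpen U := by
    apply hopen
    intro n hn he
    simp only [Set.mem_setOf_eq] at hn ⊢
    rw [Int.even_iff] at he
    by_cases hy : Even (y:ℤ)
    · have h0 : ε = 0 := by simp [hε, hy]
      rw [Int.even_iff] at hy
      omega
    · have h0 : ε = 1 := by simp [hε, hy]
      rw [Int.not_even_iff] at hy
      omega
  have hVo : IsOpen V := by
    apply hopen
    intro n hn he
    simp only [Set.mem_setOf_eq] at hn ⊢
    rw [Int.even_iff] at he
    by_cases hy : Even (y:ℤ)
    · have h0 : ε = 0 := by simp [hε, hy]
      rw [Int.even_iff] at hy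
      omega
    · have h0 : ε = 1 := by simp [hε, hy]
      rw [Int.not_even_iff] at hy
      omega
  have hpre : IsPreconnected s := isPreconnected_connectedComponentIn
  have hsub : s ⊆ U ∪ V := by
    intro t ht
    have htne : t ∈ ({y}ᶜ : Set ↥(Icc (0:ℤ) N)) :=
      connectedComponentIn_subset _ _ ht
    have htne' : (t:ℤ) ≠ (y:ℤ) := by
      intro h
      exact htne (Set.mem_singleton_iff.mpr (Subtype.ext h))
    rcases lt_or_gt_of_ne htne' with h | h
    · left; simp only [hUdef, Set.mem_preimage, Set.mem_setOf_eq]; omega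
    · right; simp only [hVdef, Set.mem_preimage, Set.mem_setOf_eq]; omega
  have hxU : x ∈ U := by simp only [hUdef, Set.mem_preimage, Set.mem_setOf_eq]; omega
  have hzV : z ∈ V := by simp only [hVdef, Set.mem_preimage, Set.mem_setOf_eq]; omega
  obtain ⟨t, hts, htU, htV⟩ := hpre U V hUo hVo hsub ⟨x, hxs, hxU⟩ ⟨z, hzs, hzV⟩
  have htne : t ∈ ({y}ᶜ : Set ↥(Icc (0:ℤ) N)) := connectedComponentIn_subset _ _ hts
  have htne' : (t:ℤ) ≠ (y:ℤ) := by
    intro h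
    exact htne (Set.mem_singleton_iff.mpr (Subtype.ext h))
  simp only [hUdef, hVdef, Set.mem_preimage, Set.mem_setOf_eq] at htU htV
  omega

lemma khal_Icc_isCOTS (N : ℤ) (hN : 0 ≤ N) :
    IsCOTS (@instTopologicalSpaceSubtype ℤ (fun n => n ∈ Icc (0:ℤ) N) khal) := by
  constructor
  · exact khal_Icc_connectedSpace N hN
  · intro S hS
    obtain ⟨p, q, r, hpq, hpr, hqr, rfl⟩ := Set.ncard_eq_three.mp hS
    have tri : ∀ u v : ↥(Icc (0:ℤ) N), u ≠ v → (u:ℤ) < v ∨ (v:ℤ) < u := by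
      intro u v h
      rcases lt_trichotomy (u:ℤ) (v:ℤ) with h' | h' | h'
      · exact Or.inl h'
      · exact absurd (Subtype.ext h') h
      · exact Or.inr h'
    obtain ⟨x, y, z, hxy, hyz, hset⟩ : ∃ x y z : ↥(Icc (0:ℤ) N),
        (x:ℤ) < y ∧ (y:ℤ) < z ∧ ({x, y, z} : Set ↥(Icc (0:ℤ) N)) = {p, q, r} := by
      rcases tri p q hpq with h1 | h1 <;> rcases tri p r hpr with h2 | h2 <;>
        rcases tri q r hqr with h3 | h3
      · exact ⟨p, q, r, h1, h3, rfl⟩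
      · refine ⟨p, r, q, h2, h3, ?_⟩
        ext w
        simp only [Set.mem_insert_iff, Set.mem_singleton_iff]
        tauto
      · exact absurd h3 (by omega)
      · refine ⟨r, p, q, h2, h1, ?_⟩
        ext w
        simp only [Set.mem_insert_iff, Set.mem_singleton_iff]
        tauto
      · refine ⟨q, p, r, h1, h2, ?_⟩
        ext w
        simp only [Set.mem_insert_iff, Set.mem_singleton_iff]
        tauto
      · exact absurd h3 (by omega)
      · refine ⟨q, r, p, h3, h2, ?_⟩
        ext w
        simp only [Set.mem_insert_iff, Set.mem_singleton_iff]
        tauto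
      · refine ⟨r, q, p, h3, h1, ?_⟩
        ext w
        simp only [Set.mem_insert_iff, Set.mem_singleton_iff]
        tauto
    rw [← hset]
    refine ⟨y, by simp, x, ⟨by simp, ?_⟩, z, ⟨by simp, ?_⟩, khal_Icc_sep N hxy hyz⟩
    · intro h
      rw [Set.mem_singleton_iff] at h
      rw [h] at hxy
      omega
    · intro h
      rw [Set.mem_singleton_iff] at h
      rw [h] at hyz
      omega

lemma khal_walk_continuous {Y : Type*} (tY : TopologicalSpace Y) (N : ℤ) (w : ℤ → Y)
    (h : ∀ n : ℤ, Even n → 0 ≤ n → n ≤ N →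
      (0 < n → w n ∈ @closure Y tY {w (n - 1)}) ∧ (n < N → w n ∈ @closure Y tY {w (n + 1)})) :
    @Continuous _ _ (@instTopologicalSpaceSubtype ℤ (fun n => n ∈ Icc (0:ℤ) N) khal) tY
      (fun t : ↥(Icc (0:ℤ) N) => w t.val) := by
  letI := khal
  letI := tY
  rw [continuous_def]
  intro V hV
  have hkey : ∀ p q : Y, p ∈ closure {q} → p ∈ V → q ∈ V := by
    intro p q hpq hpV
    obtain ⟨r, hrV, hrq⟩ := mem_closure_iff.mp hpq V hV hpV
    rwa [← Set.mem_singleton_iff.mp hrq]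
  have hpre : (fun t : ↥(Icc (0:ℤ) N) => w t.val) ⁻¹' V =
      Subtype.val ⁻¹' {n : ℤ | w (max 0 (min n N)) ∈ V} := by
    ext t
    have ht := t.2
    rw [Set.mem_Icc] at ht
    have hclamp : max 0 (min (t:ℤ) N) = (t:ℤ) := by omega
    simp only [Set.mem_preimage, Set.mem_setOf_eq, hclamp]
  rw [hpre]
  apply IsOpen.preimage continuous_subtype_val
  apply khal_open_of
  intro n hn he
  simp only [Set.mem_setOf_eq] at hn ⊢
  have he' := he
  rw [Int.even_iff] at he'
  by_cases h1 : 1 ≤ n ∧ n ≤ N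
  · have e1 : max 0 (min n N) = n := by omega
    rw [e1] at hn
    constructor
    · have e2 : max 0 (min (n - 1) N) = n - 1 := by omega
      rw [e2]
      exact hkey _ _ ((h n he (by omega) h1.2).1 (by omega)) hn
    · by_cases h2 : n < N
      · have e2 : max 0 (min (n + 1) N) = n + 1 := by omega
        rw [e2]
        exact hkey _ _ ((h n he (by omega) h1.2).2 h2) hn
      · have e2 : max 0 (min (n + 1) N) = n := by omega
        rw [e2]
        exact hn
  · have hside : n ≤ 0 ∨ N + 1 ≤ n := by omega
    rcases hside with h2 | h2
    · constructor
      · have e : max 0 (min (n - 1) N) = max 0 (min n N) := by omega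
        rw [e]; exact hn
      · by_cases h3 : n = 0 ∧ 0 < N
        · obtain ⟨rfl, hNpos⟩ := h3
          have e0 : max 0 (min (0:ℤ) N) = 0 := by omega
          have e1 : max 0 (min ((0:ℤ) + 1) N) = 1 := by omega
          rw [e1]
          rw [e0] at hn
          have := (h 0 Even.zero le_rfl (by omega)).2 hNpos
          rw [show (0:ℤ) + 1 = 1 by ring] at this
          exact hkey _ _ this hn
        · have e : max 0 (min (n + 1) N) = max 0 (min n N) := by omega
          rw [e]; exact hn
    · constructor
      · have e : max 0 (min (n - 1) N) = max 0 (min n N) := by omega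
        rw [e]; exact hn
      · have e : max 0 (min (n + 1) N) = max 0 (min n N) := by omega
        rw [e]; exact hn

/-! #### Walks in finite connected spaces -/

def relC (C : Type*) [TopologicalSpace C] (u v : C) : Prop :=
  u ∈ closure {v} ∨ v ∈ closure {u}

lemma relC_refl {C : Type*} [TopologicalSpace C] (u : C) : relC C u u :=
  Or.inl (subset_closure rfl)

lemma relC_symm {C : Type*} [TopologicalSpace C] {u v : C} (h : relC C u v) : relC C v u :=
  h.symm

lemma relC_map {C Y : Type*} [TopologicalSpace C] [TopologicalSpace Y] {f : C → Y}
    (hf : Continuous f) {u v : C} (h : relC C u v) :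
    f u ∈ closure {f v} ∨ f v ∈ closure {f u} := by
  have key : ∀ p q : C, p ∈ closure {q} → f p ∈ closure {f q} := by
    intro p q hpq
    have h1 : f p ∈ f '' closure {q} := ⟨p, hpq, rfl⟩
    have h2 := image_closure_subset_closure_image (s := {q}) hf h1
    rwa [Set.image_singleton] at h2
  rcases h with h | h
  · exact Or.inl (key _ _ h)
  · exact Or.inr (key _ _ h)

lemma exists_reflTransGen {C : Type*} [TopologicalSpace C] [Finite C] [PreconnectedSpace C]
    (x y : C) : Relation.ReflTransGen (relC C) x y := by
  set S := {z : C | Relation.ReflTransGen (relC C) x z} with hS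
  set U : C → Set C := fun z => ⋂₀ {V : Set C | IsOpen V ∧ z ∈ V} with hU
  have hUopen : ∀ z, IsOpen (U z) := fun z =>
    Set.Finite.isOpen_sInter (Set.toFinite _) fun V hV => hV.1
  have hUmem : ∀ z, z ∈ U z := fun z => Set.mem_sInter.mpr fun V hV => hV.2
  have hUrel : ∀ z w, w ∈ U z → relC C z w := by
    intro z w hw
    left
    rw [mem_closure_iff]
    intro o ho hzo
    exact ⟨w, Set.mem_sInter.mp hw o ⟨ho, hzo⟩, rfl⟩
  have hopen : IsOpen S := by
    have heq : S = ⋃ z ∈ S, U z := by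
      apply Set.Subset.antisymm
      · intro z hz
        exact Set.mem_biUnion hz (hUmem z)
      · intro w hw
        simp only [Set.mem_iUnion, exists_prop] at hw
        obtain ⟨z, hz, hw⟩ := hw
        exact hz.tail (hUrel z w hw)
    rw [heq]
    exact isOpen_biUnion fun z _ => hUopen z
  have hclosed : IsClosed S := by
    rw [← isOpen_compl_iff]
    have heq : Sᶜ = ⋃ z ∈ Sᶜ, U z := by
      apply Set.Subset.antisymm
      · intro z hz
        exact Set.mem_biUnion hz (hUmem z)
      · intro w hw
        simp only [Set.mem_iUnion, exists_prop] at hw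
        obtain ⟨z, hz, hw⟩ := hw
        intro hwS
        exact hz (hwS.tail (relC_symm (hUrel z w hw)))
    rw [heq]
    exact isOpen_biUnion fun z _ => hUopen z
  rcases isClopen_iff.mp ⟨hclosed, hopen⟩ with h | h
  · have : x ∈ S := Relation.ReflTransGen.refl
    rw [h] at this
    exact absurd this (Set.notMem_empty x)
  · have : y ∈ S := by rw [h]; trivial
    exact this

lemma exists_covering_walk {C : Type*} [TopologicalSpace C] [Finite C] [PreconnectedSpace C]
    (x y : C) :
    ∃ l : List C, List.Chain (relC C) x l ∧
      (x :: l).getLast (List.cons_ne_nil _ _) = y ∧ ∀ c : C, c ∈ x :: l := by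
  classical
  haveI := Fintype.ofFinite C
  have hwalk : ∀ u v : C, ∃ l : List C, List.Chain (relC C) u l ∧
      (u :: l).getLast (List.cons_ne_nil _ _) = v :=
    fun u v => List.exists_isChain_cons_of_relationReflTransGen (exists_reflTransGen u v)
  have hcomp : ∀ (l₁ : List C) (u : C) (l₂ : List C),
      List.Chain (relC C) u l₁ →
      List.Chain (relC C) ((u :: l₁).getLast (List.cons_ne_nil _ _)) l₂ →
      List.Chain (relC C) u (l₁ ++ l₂) ∧
        (u :: (l₁ ++ l₂)).getLast (List.cons_ne_nil _ _) =
          (((u :: l₁).getLast (List.cons_ne_nil _ _)) :: l₂).getLast (List.cons_ne_nil _ _) := by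
    intro l₁
    induction l₁ with
    | nil =>
      intro u l₂ _ h₂
      refine ⟨by simpa using h₂, ?_⟩
      simp
    | cons a t ih =>
      intro u l₂ h₁ h₂
      replace h₁ : relC C u a ∧ List.Chain (relC C) a t := List.isChain_cons_cons.mp h₁
      have h₂' : List.Chain (relC C) ((a :: t).getLast (List.cons_ne_nil _ _)) l₂ := by
        rwa [List.getLast_cons_cons] at h₂
      obtain ⟨hc, hl⟩ := ih a l₂ h₁.2 h₂'
      refine ⟨?_, ?_⟩
      · rw [List.cons_append]
        exact List.isChain_cons_cons.mpr ⟨h₁.1, hc⟩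
      · rw [List.cons_append, List.getLast_cons_cons, List.getLast_cons_cons]
        exact hl
  have main : ∀ (todo : List C) (u : C), ∃ l : List C, List.Chain (relC C) u l ∧
      (u :: l).getLast (List.cons_ne_nil _ _) = y ∧ ∀ c ∈ todo, c ∈ u :: l := by
    intro todo
    induction todo with
    | nil =>
      intro u
      obtain ⟨l, h1, h2⟩ := hwalk u y
      exact ⟨l, h1, h2, by simp⟩
    | cons p rest ih =>
      intro u
      obtain ⟨l₁, h1, h2⟩ := hwalk u p
      subst h2
      obtain ⟨l₂, h3, h4, h5⟩ := ih ((u :: l₁).getLast (List.cons_ne_nil _ _))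
      obtain ⟨hc, hl⟩ := hcomp l₁ u l₂ h1 h3
      refine ⟨l₁ ++ l₂, hc, ?_, ?_⟩
      · rw [hl]
        exact h4
      · intro d hd
        rw [List.mem_cons] at hd
        rcases hd with rfl | hd
        · have hm : (u :: l₁).getLast (List.cons_ne_nil _ _) ∈ u :: l₁ := List.getLast_mem _
          rcases List.mem_cons.mp hm with h | h
          · rw [List.mem_cons]; exact Or.inl h
          · rw [List.mem_cons]; exact Or.inr (List.mem_append_left _ h)
        · have hm := h5 d hd
          rcases List.mem_cons.mp hm with h | h
          · have hm2 : (u :: l₁).getLast (List.cons_ne_nil _ _) ∈ u :: l₁ := List.getLast_mem _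
            rw [h]
            rcases List.mem_cons.mp hm2 with h' | h'
            · rw [List.mem_cons]; exact Or.inl h'
            · rw [List.mem_cons]; exact Or.inr (List.mem_append_left _ h')
          · rw [List.mem_cons]; exact Or.inr (List.mem_append_right _ h)
  obtain ⟨l, h1, h2, h3⟩ := main (Finset.univ.toList (α := C)) x
  exact ⟨l, h1, h2, fun c => h3 c (by simp)⟩

lemma walk_fun {C : Type*} [TopologicalSpace C] [Finite C] [PreconnectedSpace C] (x y : C) :
    ∃ (M : ℤ) (v : ℤ → C), 0 ≤ M ∧
      (∀ i : ℤ, i ≤ 0 → v i = x) ∧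
      (∀ i : ℤ, M ≤ i → v i = y) ∧
      (∀ i : ℤ, relC C (v i) (v (i + 1))) ∧
      (∀ c : C, ∃ i : ℤ, 0 ≤ i ∧ i ≤ M ∧ v i = c) := by
  classical
  obtain ⟨l, hch, hlast, hcov⟩ := exists_covering_walk x y
  set L := x :: l with hL
  have hL0 : 0 < L.length := by simp [hL]
  have hch' : L.Chain' (relC C) := hch
  refine ⟨(L.length : ℤ) - 1, fun i => L.getD i.toNat y, by omega, ?_, ?_, ?_, ?_⟩
  · intro i hi
    show L.getD i.toNat y = x
    have e : i.toNat = 0 := by omega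
    rw [e, hL]
    simp
  · intro i hi
    show L.getD i.toNat y = y
    by_cases h : i.toNat < L.length
    · have h1 : i.toNat = L.length - 1 := by omega
      rw [h1, List.getD_eq_getElem _ _ (by omega), ← List.getLast_eq_getElem]
      exact hlast
    · rw [List.getD_eq_default _ _ (by omega)]
  · intro i
    show relC C (L.getD i.toNat y) (L.getD (i + 1).toNat y)
    by_cases h0 : i < 0
    · have e1 : i.toNat = 0 := by omega
      have e2 : (i + 1).toNat = 0 := by omega
      rw [e1, e2]
      exact relC_refl _
    · push_neg at h0
      have e1 : (i + 1).toNat = i.toNat + 1 := by omega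
      rw [e1]
      set n := i.toNat with hn
      by_cases h : n + 1 < L.length
      · rw [List.getD_eq_getElem _ _ (by omega), List.getD_eq_getElem _ _ h]
        have := List.isChain_iff_getElem.mp hch' n (by omega)
        simpa [List.get_eq_getElem] using this
      · by_cases h2 : n < L.length
        · have h3 : n = L.length - 1 := by omega
          rw [h3, List.getD_eq_getElem _ _ (by omega), List.getD_eq_default _ _ (by omega),
            ← List.getLast_eq_getElem, hlast]
          exact relC_refl _
          exact List.cons_ne_nil _ _
        · rw [List.getD_eq_default _ _ (by omega), List.getD_eq_default _ _ (by omega)]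
          exact relC_refl _
  · intro c
    obtain ⟨n, hn, hget⟩ := List.mem_iff_getElem.mp (hcov c)
    refine ⟨(n : ℤ), by omega, by omega, ?_⟩
    show L.getD ((n : ℤ)).toNat y = c
    have e : ((n : ℤ)).toNat = n := by omega
    rw [e, List.getD_eq_getElem _ _ hn, hget]

/-! #### COTS-path from a closure-chain sequence -/

lemma isCOTSPath_of_seq {Y : Type*} (tY : TopologicalSpace Y) (s : ℤ → Y) (N : ℤ) (hN : 0 ≤ N)
    (hrel : ∀ i : ℤ, s i ∈ @closure Y tY {s (i + 1)} ∨ s (i + 1) ∈ @closure Y tY {s i}) :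
    IsCOTSPath tY (s '' Icc 0 N) := by
  letI := tY
  classical
  set w : ℤ → Y := fun n =>
    if Even n then s (n / 2)
    else if s ((n - 1) / 2) ∈ closure {s ((n - 1) / 2 + 1)} then s ((n - 1) / 2 + 1)
    else s ((n - 1) / 2) with hw
  have hwe : ∀ m : ℤ, Even m → w m = s (m / 2) := by
    intro m hm
    simp only [hw]
    rw [if_pos hm]
  have hwo : ∀ m : ℤ, ¬Even m →
      w m = if s ((m - 1) / 2) ∈ closure {s ((m - 1) / 2 + 1)} then s ((m - 1) / 2 + 1)
        else s ((m - 1) / 2) := by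
    intro m hm
    simp only [hw]
    rw [if_neg hm]
  refine ⟨↥(Icc (0:ℤ) (2 * N)), @instTopologicalSpaceSubtype ℤ _ khal,
    (Set.finite_Icc _ _).to_subtype, khal_Icc_isCOTS _ (by omega),
    fun t => w t.val, khal_walk_continuous tY (2 * N) w ?_, ?_⟩
  · intro n he h0 h2N
    obtain ⟨i, rfl⟩ : ∃ i : ℤ, n = 2 * i := by
      obtain ⟨r, hr⟩ := he
      exact ⟨r, by omega⟩
    have e1 : 2 * i / 2 = i := by omega
    have hwn : w (2 * i) = s i := by rw [hwe _ he, e1]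
    constructor
    · intro hpos
      have hodd : ¬Even (2 * i - 1) := by
        rw [Int.even_iff] at he ⊢
        omega
      rw [hwo _ hodd]
      have e2 : (2 * i - 1 - 1) / 2 = i - 1 := by omega
      rw [e2]
      have e3 : i - 1 + 1 = i := by ring
      rw [e3]
      split_ifs with hcase
      · rw [hwn]
        exact subset_closure rfl
      · rw [hwn]
        rcases hrel (i - 1) with hr | hr
        · rw [e3] at hr
          exact absurd hr hcase
        · rw [e3] at hr
          exact hr
    · intro hlt
      have hodd : ¬Even (2 * i + 1) := by
        rw [Int.even_iff] at he ⊢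
        omega
      rw [hwo _ hodd]
      have e2 : (2 * i + 1 - 1) / 2 = i := by omega
      rw [e2, hwn]
      split_ifs with hcase
      · exact hcase
      · exact subset_closure rfl
  · ext p
    simp only [Set.mem_range, Set.mem_image, Subtype.exists, Set.mem_Icc]
    constructor
    · rintro ⟨n, ⟨h0, h2⟩, rfl⟩
      by_cases he : Even n
      · have he' := he
        rw [Int.even_iff] at he'
        exact ⟨n / 2, ⟨by omega, by omega⟩, (hwe n he).symm⟩
      · have ho := Int.not_even_iff.mp he
        rw [hwo n he]
        split_ifs
      

        · exact ⟨(n - 1) / 2 + 1, ⟨by omega, by omega⟩, rfl⟩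
        · exact ⟨(n - 1) / 2, ⟨by omega, by omega⟩, rfl⟩
    · rintro ⟨i, ⟨h0, hN'⟩, rfl⟩
      refine ⟨2 * i, ⟨by omega, by omega⟩, ?_⟩
      rw [hwe _ ⟨i, by ring⟩]
      rw [show 2 * i / 2 = i by omega]

end COTSGlueAux

/-- The union of two COTS-paths sharing an endpoint is a COTS-path. -/
theorem stmt4 {Y : Type*} (tY : TopologicalSpace Y) (α β : Set Y) (a b c : Y)
    (hα : IsCOTSPathFromTo tY α a b) (hβ : IsCOTSPathFromTo tY β b c) :
    IsCOTSPath tY (α ∪ β) := by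
  classical
  open COTSGlueAux in
  obtain ⟨C₁, t₁, fin₁, cots₁, f₁, hf₁, hr₁, c₀, c₁, -, -, -, hc₁⟩ := hα
  obtain ⟨C₂, t₂, fin₂, cots₂, f₂, hf₂, hr₂, d₀, d₁, -, -, hd₀, -⟩ := hβ
  letI := tY
  letI := t₁
  letI := t₂
  haveI := fin₁
  haveI := fin₂
  haveI : ConnectedSpace C₁ := cots₁.1
  haveI : ConnectedSpace C₂ := cots₂.1
  obtain ⟨x₁⟩ : Nonempty C₁ := inferInstance
  obtain ⟨M₁, v₁, hM₁, -, hv₁M, hv₁rel, hv₁cov⟩ := COTSGlueAux.walk_fun x₁ c₁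
  obtain ⟨M₂, v₂, hM₂, hv₂0, hv₂M, hv₂rel, hv₂cov⟩ := COTSGlueAux.walk_fun d₀ d₀
  set s : ℤ → Y := fun i => if i ≤ M₁ then f₁ (v₁ i) else f₂ (v₂ (i - M₁)) with hs
  have hsle : ∀ i : ℤ, i ≤ M₁ → s i = f₁ (v₁ i) := by
    intro i h
    simp only [hs]
    rw [if_pos h]
  have hsgt : ∀ i : ℤ, M₁ < i → s i = f₂ (v₂ (i - M₁)) := by
    intro i h
    simp only [hs]
    rw [if_neg (by omega)]
  have hsM₁ : s M₁ = b := by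
    rw [hsle M₁ le_rfl, hv₁M M₁ le_rfl, hc₁]
  have hrel : ∀ i : ℤ, s i ∈ closure {s (i + 1)} ∨ s (i + 1) ∈ closure {s i} := by
    intro i
    rcases lt_trichotomy i M₁ with h | h | h
    · rw [hsle i (by omega), hsle (i + 1) (by omega)]
      exact COTSGlueAux.relC_map hf₁ (hv₁rel i)
    · subst h
      have h1 : s i = f₂ (v₂ 0) := by
        rw [hsM₁, hv₂0 0 le_rfl, hd₀]
      rw [h1, hsgt (i + 1) (by omega)]
      rw [show i + 1 - i = 0 + 1 by ring]
      exact COTSGlueAux.relC_map hf₂ (hv₂rel 0)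
    · rw [hsgt i (by omega), hsgt (i + 1) (by omega)]
      rw [show i + 1 - M₁ = (i - M₁) + 1 by ring]
      exact COTSGlueAux.relC_map hf₂ (hv₂rel (i - M₁))
  have hpath := COTSGlueAux.isCOTSPath_of_seq tY s (M₁ + M₂) (by omega) hrel
  have himg : s '' Set.Icc 0 (M₁ + M₂) = α ∪ β := by
    apply Set.Subset.antisymm
    · rintro p ⟨i, hi, rfl⟩
      rw [Set.mem_Icc] at hi
      by_cases h : i ≤ M₁
      · left
        rw [← hr₁, hsle i h]
        exact ⟨v₁ i, rfl⟩
      · right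
        rw [← hr₂, hsgt i (by omega)]
        exact ⟨v₂ (i - M₁), rfl⟩
    · rintro p (hp | hp)
      · rw [← hr₁] at hp
        obtain ⟨u, rfl⟩ := hp
        obtain ⟨j, hj0, hjM, hj⟩ := hv₁cov u
        exact ⟨j, Set.mem_Icc.mpr ⟨hj0, by omega⟩, by rw [hsle j hjM, hj]⟩
      · rw [← hr₂] at hp
        obtain ⟨u, rfl⟩ := hp
        obtain ⟨j, hj0, hjM, hj⟩ := hv₂cov u
        by_cases hj0' : j = 0
        · subst hj0'
          refine ⟨M₁, Set.mem_Icc.mpr ⟨by omega, by omega⟩, ?_⟩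
          rw [hsM₁, ← hj, hv₂0 0 le_rfl, hd₀]
        · refine ⟨M₁ + j, Set.mem_Icc.mpr ⟨by omega, by omega⟩, ?_⟩
          rw [hsgt (M₁ + j) (by omega), show M₁ + j - M₁ = j by ring, hj]
  rw [← himg]
  exact hpath
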